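/- Fix ρ ∈ (0,1/2). The function χ(π₁) = log(π₁/(1−π₁)) − [(1−2ρ)²π₁(1−π₁) + ρ(1−ρ)]/[(1−2ρ)π₁(1−π₁)] · log([(1−2ρ)π₁+ρ]/[(1−2ρ)(1−π₁)+ρ]) defined for π₁ ∈ (0,1) satisfies χ(1/2) = 0 and χ′(π₁) = [ρ(1−ρ)(1−2π₁)]/[(1−2ρ)π₁²(1−π₁)²] · log([(1−2ρ)π₁+ρ]/[(1−2ρ)(1−π₁)+ρ]) < 0 for all π₁ ∈ (0,1) with π₁ ≠ 1/2; hence χ(π₁) < 0 for π₁ > 1/2 and χ(π₁) > 0 for π₁ < 1/2. -/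

import Mathlib

/-- fix `ρ ∈ (0,1/2)` and let
`χ(p) = log(p/(1−p)) − [((1−2ρ)²p(1−p) + ρ(1−ρ))/((1−2ρ)p(1−p))] log(((1−2ρ)p+ρ)/((1−2ρ)(1−p)+ρ))`
on `(0,1)`. Then `χ(1/2) = 0`, and for `p ∈ (0,1)` with `p ≠ 1/2` the derivative equals the
stated expression and is negative; hence `χ(p) < 0` for `p > 1/2` and `χ(p) > 0` for `p < 1/2`. -/
theorem stmt16 (ρ : ℝ) (hρ : ρ ∈ Set.Ioo (0:ℝ) (1/2))
    (χ : ℝ → ℝ)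
    (hχ : ∀ p ∈ Set.Ioo (0:ℝ) 1, χ p =
      Real.log (p / (1 - p))
        - (((1 - 2*ρ)^2 * p * (1 - p) + ρ * (1 - ρ)) / ((1 - 2*ρ) * p * (1 - p)))
            * Real.log (((1 - 2*ρ) * p + ρ) / ((1 - 2*ρ) * (1 - p) + ρ))) :
    χ (1/2) = 0 ∧
    (∀ p ∈ Set.Ioo (0:ℝ) 1, p ≠ 1/2 →
      deriv χ p = (ρ * (1 - ρ) * (1 - 2*p)) / ((1 - 2*ρ) * p^2 * (1 - p)^2)
          * Real.log (((1 - 2*ρ) * p + ρ) / ((1 - 2*ρ) * (1 - p) + ρ)) ∧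
      deriv χ p < 0) ∧
    (∀ p ∈ Set.Ioo (0:ℝ) 1, 1/2 < p → χ p < 0) ∧
    (∀ p ∈ Set.Ioo (0:ℝ) 1, p < 1/2 → 0 < χ p) := by
  obtain ⟨hρ0, hρ2⟩ := hρ
  have hc : (0:ℝ) < 1 - 2*ρ := by linarith
  have hc' : (1:ℝ) - 2*ρ ≠ 0 := ne_of_gt hc
  -- derivative key lemma
  have key : ∀ p ∈ Set.Ioo (0:ℝ) 1,
      HasDerivAt χ ((ρ * (1 - ρ) * (1 - 2*p)) / ((1 - 2*ρ) * p^2 * (1 - p)^2)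
          * Real.log (((1 - 2*ρ) * p + ρ) / ((1 - 2*ρ) * (1 - p) + ρ))) p := by
    intro p hp
    obtain ⟨hp0, hp1⟩ := hp
    have h1p : (0:ℝ) < 1 - p := by linarith
    have ha0 : (0:ℝ) < (1 - 2*ρ) * p + ρ := by nlinarith
    have hb0 : (0:ℝ) < (1 - 2*ρ) * (1 - p) + ρ := by nlinarith
    have hp0' := ne_of_gt hp0
    have h1p' := ne_of_gt h1p
    have ha0' := ne_of_gt ha0
    have hb0' := ne_of_gt hb0
    have h2 : HasDerivAt (fun q : ℝ => 1 - q) (-1) p := by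
      simpa using (hasDerivAt_id p).const_sub 1
    have hq : HasDerivAt (fun q : ℝ => q / (1 - q))
        ((1*(1-p) - p*(-1))/((1-p)^2)) p := (hasDerivAt_id p).div h2 h1p'
    have hlog1 := hq.log (div_ne_zero hp0' h1p')
    have hN : HasDerivAt (fun q : ℝ => (1 - 2*ρ)^2 * q * (1 - q) + ρ * (1 - ρ))
        ((1-2*ρ)^2*1*(1-p) + (1-2*ρ)^2*p*(-1)) p := by
      have : HasDerivAt (fun q : ℝ => (1 - 2*ρ)^2 * q) ((1-2*ρ)^2*1) p := by
        simpa using (hasDerivAt_id p).const_mul ((1-2*ρ)^2)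
      simpa [mul_assoc] using (this.mul h2).add_const (ρ * (1 - ρ))
    have hDn : HasDerivAt (fun q : ℝ => (1 - 2*ρ) * q * (1 - q))
        ((1-2*ρ)*1*(1-p) + (1-2*ρ)*p*(-1)) p := by
      have : HasDerivAt (fun q : ℝ => (1 - 2*ρ) * q) ((1-2*ρ)*1) p := by
        simpa using (hasDerivAt_id p).const_mul (1-2*ρ)
      simpa [mul_assoc, Pi.mul_def] using this.mul h2
    have hDn0 : (1 - 2*ρ) * p * (1 - p) ≠ 0 := by positivity
    have hG := hN.div hDn hDn0
    have ha : HasDerivAt (fun q : ℝ => (1 - 2*ρ) * q + ρ) (1-2*ρ) p := by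
      simpa using ((hasDerivAt_id p).const_mul (1-2*ρ)).add_const ρ
    have hb : HasDerivAt (fun q : ℝ => (1 - 2*ρ) * (1 - q) + ρ) (-(1-2*ρ)) p := by
      have := (h2.const_mul (1-2*ρ)).add_const ρ
      simpa [mul_comm] using this
    have hab := ha.div hb hb0'
    have hlog2 := hab.log (div_ne_zero ha0' hb0')
    have hF := hlog1.sub (hG.mul hlog2)
    have heq : χ =ᶠ[nhds p] (fun q => Real.log (q / (1 - q))
        - (((1 - 2*ρ)^2 * q * (1 - q) + ρ * (1 - ρ)) / ((1 - 2*ρ) * q * (1 - q)))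
            * Real.log (((1 - 2*ρ) * q + ρ) / ((1 - 2*ρ) * (1 - q) + ρ))) := by
      filter_upwards [Ioo_mem_nhds hp0 hp1] with q hq
      exact hχ q hq
    have hF' := hF.congr_of_eventuallyEq heq
    refine hF'.congr_deriv ?_
    simp only [Pi.div_apply]
    field_simp
    ring
  have neg : ∀ p ∈ Set.Ioo (0:ℝ) 1, p ≠ 1/2 →
      (ρ * (1 - ρ) * (1 - 2*p)) / ((1 - 2*ρ) * p^2 * (1 - p)^2)
          * Real.log (((1 - 2*ρ) * p + ρ) / ((1 - 2*ρ) * (1 - p) + ρ)) < 0 := by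
    intro p hp hne
    obtain ⟨hp0, hp1⟩ := hp
    have ha0 : (0:ℝ) < (1 - 2*ρ) * p + ρ := by nlinarith
    have hb0 : (0:ℝ) < (1 - 2*ρ) * (1 - p) + ρ := by nlinarith
    have h1p : (0:ℝ) < 1 - p := by linarith
    have hden : (0:ℝ) < (1 - 2*ρ) * p^2 * (1 - p)^2 :=
      mul_pos (mul_pos hc (pow_pos hp0 2)) (pow_pos h1p 2)
    rcases lt_or_gt_of_ne hne with h | h
    · have hlt : (1 - 2*ρ) * p + ρ < (1 - 2*ρ) * (1 - p) + ρ := by nlinarith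
      have hlog : Real.log (((1 - 2*ρ) * p + ρ) / ((1 - 2*ρ) * (1 - p) + ρ)) < 0 :=
        Real.log_neg (by positivity) ((div_lt_one hb0).2 hlt)
      have hcoef : 0 < (ρ * (1 - ρ) * (1 - 2*p)) / ((1 - 2*ρ) * p^2 * (1 - p)^2) := by
        apply div_pos (by nlinarith) hden
      exact mul_neg_of_pos_of_neg hcoef hlog
    · have hlt : (1 - 2*ρ) * (1 - p) + ρ < (1 - 2*ρ) * p + ρ := by nlinarith
      have hlog : 0 < Real.log (((1 - 2*ρ) * p + ρ) / ((1 - 2*ρ) * (1 - p) + ρ)) :=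
        Real.log_pos ((one_lt_div hb0).2 hlt)
      have hcoef : (ρ * (1 - ρ) * (1 - 2*p)) / ((1 - 2*ρ) * p^2 * (1 - p)^2) < 0 := by
        apply div_neg_of_neg_of_pos (by nlinarith) hden
      exact mul_neg_of_neg_of_pos hcoef hlog
  have hzero : χ (1/2) = 0 := by
    rw [hχ (1/2) (by norm_num)]
    norm_num
  refine ⟨hzero, ?_, ?_, ?_⟩
  · intro p hp hne
    exact ⟨(key p hp).deriv, (key p hp).deriv ▸ neg p hp hne⟩
  · intro p hp hhalf
    obtain ⟨hp0, hp1⟩ := hp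
    have hanti : StrictAntiOn χ (Set.Icc (1/2) p) := by
      apply strictAntiOn_of_deriv_neg (convex_Icc _ _)
      · intro q hq
        obtain ⟨hq1, hq2⟩ := hq
        exact ((key q ⟨by linarith, by linarith⟩).differentiableAt).continuousAt.continuousWithinAt
      · intro q hq
        rw [interior_Icc] at hq
        obtain ⟨hq1, hq2⟩ := hq
        have hmem : q ∈ Set.Ioo (0:ℝ) 1 := ⟨by linarith, by linarith⟩
        rw [(key q hmem).deriv]
        exact neg q hmem (by intro h; rw [h] at hq1; linarith)
    have := hanti (Set.left_mem_Icc.2 (le_of_lt hhalf)) (Set.right_mem_Icc.2 (le_of_lt hhalf)) hhalf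
    rw [hzero] at this
    exact this
  · intro p hp hhalf
    obtain ⟨hp0, hp1⟩ := hp
    have hanti : StrictAntiOn χ (Set.Icc p (1/2)) := by
      apply strictAntiOn_of_deriv_neg (convex_Icc _ _)
      · intro q hq
        obtain ⟨hq1, hq2⟩ := hq
        exact ((key q ⟨by linarith, by linarith⟩).differentiableAt).continuousAt.continuousWithinAt
      · intro q hq
        rw [interior_Icc] at hq
        obtain ⟨hq1, hq2⟩ := hq
        have hmem : q ∈ Set.Ioo (0:ℝ) 1 := ⟨by linarith, by linarith⟩
        rw [(key q hmem).deriv]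
        exact neg q hmem (by intro h; rw [h] at hq2; linarith)
    have := hanti (Set.left_mem_Icc.2 (le_of_lt hhalf)) (Set.right_mem_Icc.2 (le_of_lt hhalf)) hhalf
    rw [hzero] at this
    exact this
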